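/- Let S be a finite semigroup whose complex semigroup algebra ℂS is unital. Then for every s ∈ S, the set φ*(s) = {e ∈ E(S) | se = s} of idempotent right identities of s is nonempty, and likewise φ⁺(s) = {e ∈ E(S) | es = s} is nonempty. -/

import Mathlib

/-- The set of idempotent right identities of `s`: φ*(s) = {e ∈ E(S) | se = s}. -/
def rIds {S : Type*} [Mul S] (s : S) : Set S := {e | e * e = e ∧ s * e = s}

/-- The set of idempotent left identities of `s`: φ⁺(s) = {e ∈ E(S) | es = s}. -/
def lIds {S : Type*} [Mul S] (s : S) : Set S := {e | e * e = e ∧ e * s = s}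

private def pw {S : Type*} [Semigroup S] (a : S) : ℕ → S
  | 0 => a
  | n + 1 => pw a n * a

private lemma pw_add {S : Type*} [Semigroup S] (a : S) (n m : ℕ) :
    pw a (n + m + 1) = pw a n * pw a m := by
  induction m with
  | zero => rfl
  | succ m ih =>
      show pw a (n + m + 1) * a = _
      rw [ih, mul_assoc]; rfl

private lemma exists_idem_mem {S : Type*} [Semigroup S] [Fintype S] (T : Set S)
    (hT : ∀ a b, a ∈ T → b ∈ T → a * b ∈ T) (a : S) (ha : a ∈ T) :
    ∃ e ∈ T, e * e = e := by
  have hmem : ∀ n, pw a n ∈ T := by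
    intro n
    induction n with
    | zero => exact ha
    | succ n ih => exact hT _ _ ih ha
  obtain ⟨i, j, hne, hij⟩ := Finite.exists_ne_map_eq_of_infinite (pw a)
  wlog hlt : i < j generalizing i j
  · exact this j i hne.symm hij.symm (by omega)
  obtain ⟨d, hd, rfl⟩ : ∃ d, 1 ≤ d ∧ j = i + d := ⟨j - i, by omega, by omega⟩
  have hshift : ∀ m, pw a (i + m) = pw a (i + d + m) := by
    intro m
    induction m with
    | zero => simpa using hij
    | succ m ih =>
        show pw a (i + m) * a = pw a (i + d + m) * a
        rw [ih]
  have hper : ∀ m c, pw a (i + m + c * d) = pw a (i + m) := by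
    intro m c
    induction c with
    | zero => simp
    | succ c ih =>
        have e1 : i + m + (c + 1) * d = i + d + (m + c * d) := by ring
        rw [e1, ← hshift (m + c * d),
          show i + (m + c * d) = i + m + c * d by ring, ih]
  set D : ℕ := (i + 1) * d with hD
  set m : ℕ := D - (i + 1) with hm
  have hle : i + 1 ≤ D := Nat.le_mul_of_pos_right _ (by omega)
  have hmd : (i + 1) + m = D := by omega
  refine ⟨pw a (i + m), hmem _, ?_⟩
  have key : pw a (i + m) * pw a (i + m) = pw a (i + m + (i + m) + 1) := by
    rw [pw_add]
  rw [key, show i + m + (i + m) + 1 = i + m + D by omega, hD,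
    show i + m + (i + 1) * d = i + m + (i + 1) * d from rfl, hper m (i + 1)]

private lemma exists_right_absorber {S : Type*} [Semigroup S] [Fintype S]
    (u : MonoidAlgebra ℂ S) (hu : ∀ a : MonoidAlgebra ℂ S, a * u = a) (s : S) :
    ∃ t : S, s * t = s := by
  classical
  by_contra hc
  push_neg at hc
  have h1 : (MonoidAlgebra.single s (1 : ℂ) * u).coeff s = 1 := by
    rw [hu]; simp [MonoidAlgebra.single_apply]
  rw [MonoidAlgebra.coeff_mul, MonoidAlgebra.coeff_single] at h1
  rw [Finsupp.sum_single_index (by simp)] at h1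
  have h0 : (u.coeff.sum fun a₂ b₂ => if s * a₂ = s then (1:ℂ) * b₂ else 0) = 0 := by
    rw [Finsupp.sum]
    apply Finset.sum_eq_zero
    intro t _
    simp [hc t]
  rw [h0] at h1
  exact one_ne_zero h1.symm

private lemma exists_left_absorber {S : Type*} [Semigroup S] [Fintype S]
    (u : MonoidAlgebra ℂ S) (hu : ∀ a : MonoidAlgebra ℂ S, u * a = a) (s : S) :
    ∃ t : S, t * s = s := by
  classical
  by_contra hc
  push_neg at hc
  have h1 : (u * MonoidAlgebra.single s (1 : ℂ)).coeff s = 1 := by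
    rw [hu]; simp [MonoidAlgebra.single_apply]
  rw [MonoidAlgebra.coeff_mul] at h1
  have h0 : (u.coeff.sum fun a₁ b₁ => (MonoidAlgebra.single s (1:ℂ)).coeff.sum
      fun a₂ b₂ => if a₁ * a₂ = s then b₁ * b₂ else 0) = 0 := by
    rw [Finsupp.sum]
    apply Finset.sum_eq_zero
    intro t _
    rw [MonoidAlgebra.coeff_single, Finsupp.sum_single_index (by simp)]
    simp [hc t]
  rw [h0] at h1
  exact one_ne_zero h1.symm

theorem stmt0 {S : Type*} [Semigroup S] [Fintype S]
    (h : ∃ u : MonoidAlgebra ℂ S, ∀ a : MonoidAlgebra ℂ S, u * a = a ∧ a * u = a) :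
    ∀ s : S, (rIds s).Nonempty ∧ (lIds s).Nonempty := by
  obtain ⟨u, hu⟩ := h
  intro s
  constructor
  · obtain ⟨t, ht⟩ := exists_right_absorber u (fun a => (hu a).2) s
    obtain ⟨e, he, hee⟩ := exists_idem_mem {t | s * t = s}
      (fun a b ha hb => by simp only [Set.mem_setOf_eq] at *; rw [← mul_assoc, ha, hb]) t ht
    exact ⟨e, hee, he⟩
  · obtain ⟨t, ht⟩ := exists_left_absorber u (fun a => (hu a).1) s
    obtain ⟨e, he, hee⟩ := exists_idem_mem {t | t * s = s}
      (fun a b ha hb => by simp only [Set.mem_setOf_eq] at *; rw [mul_assoc, hb, ha]) t ht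
    exact ⟨e, hee, he⟩
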